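/- Fix an integer D ≥ 2 and let Q ⊆ {0,1}^{D−1} be any set of queried prefixes with |Q| ≤ 2^{D−1} − 2. Then there exist distinct hidden strings ŝ, ŝ' ∈ {0,1}^{D−1} \ Q such that: (i) p_ŝ(s) = p_{ŝ'}(s) for every s ∈ {0,1}^D whose first D−1 bits lie in Q; and (ii) the unique even-digit-sum string in the support of p_ŝ differs from the unique even-digit-sum string in the support of p_{ŝ'}. Hence any output that is correct (positive probability and even digit sum) for the oracle indexed by ŝ is incorrect for the oracle indexed by ŝ', even though the two oracles agree on all queried prefixes. -/
import Mathlib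


open scoped BigOperators

/-- The number of `1`-bits (`true` bits) of a bit string, i.e. `∑ i, s i`. -/
def bitSum {n : ℕ} (s : Fin n → Bool) : ℕ := ∑ i, if s i then 1 else 0

/-- The `(D-1)`-bit prefix of a `D`-bit string. -/
def pre (D : ℕ) (s : Fin D → Bool) : Fin (D - 1) → Bool :=
  fun i => s (Fin.castLE (Nat.sub_le D 1) i)

/-- The oracle pmf `p_ŝ` on `{0,1}^D`: it assigns mass `2^{-(D-1)}` to a string `s`
whose last bit makes the total digit sum even when the `(D-1)`-prefix of `s` equals `ŝ`,
and odd when the prefix differs from `ŝ`; all other strings get mass `0`. -/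
noncomputable def hiddenPMF (D : ℕ) (shat : Fin (D - 1) → Bool) (s : Fin D → Bool) : ℝ :=
  if (pre D s = shat ↔ Even (bitSum s)) then ((2 : ℝ) ^ (D - 1))⁻¹ else 0


/-- For any set `Q` of queried prefixes with `|Q| ≤ 2^{D-1} - 2`, there exist distinct
unqueried hidden strings `ŝ, ŝ'` whose oracles agree on all full strings whose `(D-1)`-prefix
lies in `Q`, yet whose unique valid outputs (positive probability and even digit sum)
differ. -/
theorem stmt4 (D : ℕ) (hD : 2 ≤ D) (Q : Finset (Fin (D - 1) → Bool))
    (hQ : Q.card ≤ 2 ^ (D - 1) - 2) :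
    ∃ shat shat' : Fin (D - 1) → Bool, shat ≠ shat' ∧ shat ∉ Q ∧ shat' ∉ Q ∧
      (∀ s : Fin D → Bool, pre D s ∈ Q → hiddenPMF D shat s = hiddenPMF D shat' s) ∧
      (∀ s s' : Fin D → Bool,
        0 < hiddenPMF D shat s → Even (bitSum s) →
        0 < hiddenPMF D shat' s' → Even (bitSum s') → s ≠ s') := by
  classical
  have hcard : Fintype.card (Fin (D - 1) → Bool) = 2 ^ (D - 1) := by
    simp [Fintype.card_fun]
  have h2 : 2 ≤ 2 ^ (D - 1) := by
    calc 2 = 2 ^ 1 := rfl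
    _ ≤ 2 ^ (D - 1) := Nat.pow_le_pow_right (by norm_num) (by omega)
  have hQc : 2 ≤ Qᶜ.card := by
    have := Finset.card_compl Q
    rw [hcard] at this
    omega
  obtain ⟨a, ha, b, hb, hab⟩ := Finset.one_lt_card.mp (by omega : 1 < Qᶜ.card)
  refine ⟨a, b, hab, Finset.mem_compl.mp ha, Finset.mem_compl.mp hb, ?_, ?_⟩
  · intro s hs
    have h1 : pre D s ≠ a := fun h => Finset.mem_compl.mp ha (h ▸ hs)
    have h2 : pre D s ≠ b := fun h => Finset.mem_compl.mp hb (h ▸ hs)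
    simp [hiddenPMF, h1, h2]
  · intro s s' hs hse hs' hs'e hss
    have h1 : pre D s = a := by
      by_contra h
      simp [hiddenPMF, h, hse] at hs
    have h2 : pre D s' = b := by
      by_contra h
      simp [hiddenPMF, h, hs'e] at hs'
    exact hab (h1 ▸ h2 ▸ hss ▸ rfl)
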